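/- Let k ≥ 2 and s ≥ 1 be integers, let m = ks and n = m², and consider the scheduling instance with budget T = s = √n/k. Then there exists a real P₀ > 1 such that for every real P ≥ P₀ the level-s Lasserre relaxation of LP(s) is infeasible: there are no reals (y_I)_{I ⊆ [m]×[m]} satisfying (i) ∑_I y_I = 1; (ii) ∑_I y_I Z_I Z_Iᵀ positive semidefinite with (s+1)-zeta vectors; and (iii) ∑_I g_0(x_I) y_I Z_I Z_Iᵀ positive semidefinite and ∑_I g_ℓ(x_I) y_I Z_I Z_Iᵀ positive semidefinite for every ℓ ∈ [m], with s-zeta vectors, where x_I is the 0/1 indicator vector of I. -/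

import Mathlib

open Finset Matrix

noncomputable def zetaVec (m d : ℕ) (I : Finset (Fin m × Fin m)) :
    {J : Finset (Fin m × Fin m) // J.card ≤ d} → ℝ :=
  fun J => if (J : Finset (Fin m × Fin m)) ⊆ I then 1 else 0

noncomputable def schedDemand (P : ℝ) (l : ℕ) : ℝ := ∑ j ∈ Finset.range (l + 1), P ^ j

noncomputable def schedG0 (m : ℕ) (T : ℝ) (I : Finset (Fin m × Fin m)) : ℝ :=
  T - I.card

noncomputable def schedG (m : ℕ) (P : ℝ) (l : Fin m) (I : Finset (Fin m × Fin m)) : ℝ :=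
  (∑ p ∈ I.filter (fun p => p.1 ≤ l), P ^ (p.1.1 + 1)) - schedDemand P l.1

noncomputable def Yw (m : ℕ) (y : Finset (Fin m × Fin m) → ℝ) (S : Finset (Fin m × Fin m)) : ℝ :=
  ∑ I : Finset (Fin m × Fin m), if S ⊆ I then y I else 0

lemma psd_diag_nonneg {n : Type*} [Fintype n] [DecidableEq n] {M : Matrix n n ℝ}
    (h : M.PosSemidef) (i : n) : 0 ≤ M i i := by
  exact h.diag_nonneg

lemma diag_entry (m d : ℕ) (c : Finset (Fin m × Fin m) → ℝ) (J : Finset (Fin m × Fin m))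
    (hJ : J.card ≤ d) :
    (∑ I : Finset (Fin m × Fin m), c I • Matrix.vecMulVec (zetaVec m d I) (zetaVec m d I))
      ⟨J, hJ⟩ ⟨J, hJ⟩
      = ∑ I : Finset (Fin m × Fin m), if J ⊆ I then c I else 0 := by
  rw [Matrix.sum_apply]
  refine Finset.sum_congr rfl fun I _ => ?_
  simp only [Matrix.smul_apply, Matrix.vecMulVec_apply, zetaVec, smul_eq_mul]
  split <;> simp

lemma pe_split (m : ℕ) (y : Finset (Fin m × Fin m) → ℝ) (f : Fin m × Fin m → ℝ) (c : ℝ)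
    (J : Finset (Fin m × Fin m)) :
    ∑ I : Finset (Fin m × Fin m), (if J ⊆ I then ((∑ p ∈ I, f p) - c) * y I else 0)
      = (∑ p : Fin m × Fin m, f p * Yw m y (insert p J)) - c * Yw m y J := by
  have h1 : ∀ I : Finset (Fin m × Fin m), (if J ⊆ I then ((∑ p ∈ I, f p) - c) * y I else 0)
      = (∑ p : Fin m × Fin m, if insert p J ⊆ I then f p * y I else 0)
        - (if J ⊆ I then c * y I else 0) := by
    intro I
    by_cases h : J ⊆ I
    · simp only [if_pos h, sub_mul]
      congr 1
      have h2 : ∀ p : Fin m × Fin m,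
          (if insert p J ⊆ I then f p * y I else 0) = if p ∈ I then f p * y I else 0 := by
        intro p; simp [Finset.insert_subset_iff, h]
      rw [Finset.sum_congr rfl fun p _ => h2 p, Finset.sum_ite_mem, Finset.univ_inter,
        ← Finset.sum_mul]
    · have h2 : ∀ p : Fin m × Fin m, ¬ (insert p J ⊆ I) := by
        intro p hp; exact h (Finset.Subset.trans (Finset.subset_insert p J) hp)
      simp [h, h2]
  rw [Finset.sum_congr rfl fun I _ => h1 I, Finset.sum_sub_distrib]
  congr 1
  · rw [Finset.sum_comm]
    refine Finset.sum_congr rfl fun p _ => ?_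
    rw [Yw, Finset.mul_sum]
    exact Finset.sum_congr rfl fun I _ => by split <;> simp
  · rw [Yw, Finset.mul_sum]
    exact Finset.sum_congr rfl fun I _ => by split <;> simp

lemma no_small_feasible (k s m : ℕ) (hk : 2 ≤ k) (hs : 1 ≤ s) (hm : m = k * s)
    (P : ℝ) (hP : 1 ≤ P) (T : Finset (Fin m × Fin m)) (hcard : T.card ≤ s)
    (hg : ∀ l : Fin m, 0 ≤ schedG m P l T) : False := by
  have hm2 : 2 * s ≤ m := by rw [hm]; exact Nat.mul_le_mul_right s hk
  have hm1 : 1 ≤ m := by omega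
  have hP0 : (0:ℝ) < P := lt_of_lt_of_le one_pos hP
  set Sc : ℕ → ℕ := fun l => (T.filter fun p => p.1.1 ≤ l).card with hSc
  set W : ℕ → ℝ := fun l => ∑ p ∈ T.filter (fun p => p.1.1 ≤ l), P ^ (p.1.1 + 1) with hW
  have hcon : ∀ l, l < m → ∑ j ∈ Finset.range (l + 1), P ^ j ≤ W l := by
    intro l hl
    have h := hg ⟨l, hl⟩
    rw [schedG, sub_nonneg, schedDemand] at h
    have hfe : T.filter (fun p => p.1 ≤ (⟨l, hl⟩ : Fin m)) = T.filter (fun p => p.1.1 ≤ l) :=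
      Finset.filter_congr fun p _ => by rw [Fin.le_def]
    rw [hfe] at h
    exact h
  have key : ∀ l, l < m →
      (l + 1 ≤ Sc l ∧
        W l + l * P ^ (l + 1) ≤ Sc l * P ^ (l + 1) + ∑ j ∈ Finset.range l, P ^ (j + 1)) := by
    intro l
    induction l with
    | zero =>
      intro hl
      have hW0 : W 0 = Sc 0 * P := by
        rw [hW]
        simp only
        rw [Finset.sum_congr rfl (fun p hp => by
          have := (Finset.mem_filter.mp hp).2
          have hp0 : p.1.1 = 0 := Nat.le_zero.mp this
          rw [hp0, pow_one]), Finset.sum_const, nsmul_eq_mul, hSc]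
      have hc := hcon 0 hl
      simp only [zero_add, Finset.sum_range_one, pow_zero] at hc
      rw [hW0] at hc
      have hA : 1 ≤ Sc 0 := by
        by_contra h
        have : Sc 0 = 0 := by omega
        rw [this] at hc; norm_num at hc
      refine ⟨hA, ?_⟩
      rw [hW0]
      simp [pow_one]
    | succ l ih =>
      intro hl1
      have hl : l < m := by omega
      obtain ⟨ihA, ihB⟩ := ih hl
      have hsplit : T.filter (fun p => p.1.1 ≤ l + 1)
          = T.filter (fun p => p.1.1 ≤ l) ∪ T.filter (fun p => p.1.1 = l + 1) := by
        rw [← Finset.filter_or]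
        exact Finset.filter_congr fun p _ => by omega
      have hdisj : Disjoint (T.filter fun p => p.1.1 ≤ l) (T.filter fun p => p.1.1 = l + 1) := by
        refine Finset.disjoint_left.mpr fun p h1 h2 => ?_
        have := (Finset.mem_filter.mp h1).2
        have := (Finset.mem_filter.mp h2).2
        omega
      set a := (T.filter fun p => p.1.1 = l + 1).card with ha
      have hScs : Sc (l + 1) = Sc l + a := by
        rw [hSc]; simp only; rw [hsplit, Finset.card_union_of_disjoint hdisj]
      have hWs : W (l + 1) = W l + a * P ^ (l + 2) := by
        rw [hW]; simp only; rw [hsplit, Finset.sum_union hdisj]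
        congr 1
        rw [Finset.sum_congr rfl (fun p hp => by
          have := (Finset.mem_filter.mp hp).2
          rw [this]), Finset.sum_const, nsmul_eq_mul, ha]
      have hc := hcon (l + 1) hl1
      have hpeel : ∑ j ∈ Finset.range (l + 1 + 1), P ^ j
          = 1 + ∑ j ∈ Finset.range (l + 1), P ^ (j + 1) := by
        rw [Finset.sum_range_succ']; simp [add_comm]
      rw [hpeel, Finset.sum_range_succ, hWs] at hc
      have hpow : P ^ (l + 1) ≤ P ^ (l + 2) := pow_le_pow_right₀ hP (by omega)
      have hA2 : l + 2 ≤ Sc (l + 1) := by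
        rw [hScs]
        by_cases hA0 : a = 0
        · rw [hA0] at hc
          by_contra hcon2
          have hSl : Sc l = l + 1 := by omega
          rw [hSl] at ihB
          push_cast at ihB hc ⊢
          nlinarith
        · omega
      refine ⟨hA2, ?_⟩
      rw [hWs, hScs, Finset.sum_range_succ]
      have hAc : (l + 1 : ℝ) ≤ (Sc l : ℝ) := by exact_mod_cast ihA
      have key2 : ((Sc l : ℝ) - (l + 1)) * P ^ (l + 1) ≤ ((Sc l : ℝ) - (l + 1)) * P ^ (l + 2) :=
        mul_le_mul_of_nonneg_left hpow (by linarith)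
      push_cast
      push_cast at ihB
      nlinarith
  have hfin := (key (m - 1) (by omega)).1
  have hle : Sc (m - 1) ≤ T.card := Finset.card_filter_le _ _
  omega

theorem stmt_3 (k s m : ℕ) (hk : 2 ≤ k) (hs : 1 ≤ s) (hm : m = k * s) :
    ∃ P0 : ℝ, 1 < P0 ∧ ∀ P : ℝ, P0 ≤ P →
      ¬ ∃ y : Finset (Fin m × Fin m) → ℝ,
        (∑ I : Finset (Fin m × Fin m), y I = 1) ∧
        Matrix.PosSemidef
          (∑ I : Finset (Fin m × Fin m),
            y I • Matrix.vecMulVec (zetaVec m (s + 1) I) (zetaVec m (s + 1) I)) ∧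
        Matrix.PosSemidef
          (∑ I : Finset (Fin m × Fin m),
            (schedG0 m ((s : ℕ) : ℝ) I * y I) • Matrix.vecMulVec (zetaVec m s I) (zetaVec m s I)) ∧
        ∀ l : Fin m, Matrix.PosSemidef
          (∑ I : Finset (Fin m × Fin m),
            (schedG m P l I * y I) • Matrix.vecMulVec (zetaVec m s I) (zetaVec m s I)) := by
  refine ⟨2, one_lt_two, fun P hP => ?_⟩
  rintro ⟨y, hsum, hM, hG0, hGl⟩
  -- Step A : nonnegativity of pseudo-moments up to size s+1
  have hA : ∀ J : Finset (Fin m × Fin m), J.card ≤ s + 1 → 0 ≤ Yw m y J := by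
    intro J hJ
    have h := psd_diag_nonneg hM ⟨J, hJ⟩
    rwa [diag_entry m (s + 1) y J hJ] at h
  -- diagonal of the g0 localizer
  have hq0 : ∀ J : Finset (Fin m × Fin m), ∀ hJ : J.card ≤ s,
      0 ≤ ∑ I : Finset (Fin m × Fin m), (if J ⊆ I then schedG0 m (s : ℝ) I * y I else 0) := by
    intro J hJ
    have h := psd_diag_nonneg hG0 ⟨J, hJ⟩
    rwa [diag_entry m s _ J hJ] at h
  -- Step B : pseudo-moments of size s+1 vanish
  have hB : ∀ S : Finset (Fin m × Fin m), S.card = s + 1 → Yw m y S = 0 := by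
    intro S hS
    obtain ⟨e, he⟩ := Finset.card_pos.mp (by omega : 0 < S.card)
    set J := S.erase e with hJdef
    have hJcard : J.card = s := by
      rw [hJdef, Finset.card_erase_of_mem he, hS]; omega
    have h0 := hq0 J (le_of_eq hJcard)
    have hform : ∀ I : Finset (Fin m × Fin m),
        (if J ⊆ I then schedG0 m (s : ℝ) I * y I else 0)
          = -(if J ⊆ I then ((∑ p ∈ I, (1:ℝ)) - (s:ℝ)) * y I else 0) := by
      intro I
      split
      · rw [schedG0]
        push_cast
        simp [Finset.sum_const]
        ring
      · simp
    rw [Finset.sum_congr rfl fun I _ => hform I, Finset.sum_neg_distrib] at h0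
    rw [pe_split m y (fun _ => (1:ℝ)) (s:ℝ) J] at h0
    have hsd : ∑ p : Fin m × Fin m, (1:ℝ) * Yw m y (insert p J)
        = (∑ p ∈ (univ \ J), Yw m y (insert p J)) + (s:ℝ) * Yw m y J := by
      simp only [one_mul]
      rw [← Finset.sum_sdiff (Finset.subset_univ J)]
      congr 1
      rw [Finset.sum_congr rfl (fun p hp => by rw [Finset.insert_eq_self.mpr hp]),
        Finset.sum_const, nsmul_eq_mul, hJcard]
    rw [hsd] at h0
    have hle : ∑ p ∈ (univ \ J), Yw m y (insert p J) ≤ 0 := by linarith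
    have hnn : ∀ p ∈ (univ \ J : Finset (Fin m × Fin m)), 0 ≤ Yw m y (insert p J) := by
      intro p hp
      have hpJ : p ∉ J := (Finset.mem_sdiff.mp hp).2
      exact hA _ (le_of_eq (by rw [Finset.card_insert_of_notMem hpJ, hJcard]))
    have hz : ∀ p ∈ (univ \ J : Finset (Fin m × Fin m)), Yw m y (insert p J) = 0 :=
      (Finset.sum_eq_zero_iff_of_nonneg hnn).mp
        (le_antisymm hle (Finset.sum_nonneg hnn))
    have heJ : e ∈ (univ \ J : Finset (Fin m × Fin m)) := by
      simp [hJdef]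
    have := hz e heJ
    rwa [hJdef, Finset.insert_erase he] at this
  -- maximal-cardinality positive pseudo-moment set
  have hempty : Yw m y ∅ = 1 := by
    rw [Yw]
    simp only [Finset.empty_subset, if_true]
    exact hsum
  set 𝒮 := (univ : Finset (Finset (Fin m × Fin m))).filter
    (fun S => S.card ≤ s ∧ 0 < Yw m y S) with h𝒮
  have hne : 𝒮.Nonempty := ⟨∅, by simp [h𝒮, hempty]⟩
  obtain ⟨S₀, hS₀mem, hS₀max⟩ := Finset.exists_max_image 𝒮 Finset.card hne
  have hS₀ : S₀.card ≤ s ∧ 0 < Yw m y S₀ := by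
    have := Finset.mem_filter.mp hS₀mem
    exact this.2
  obtain ⟨hS₀card, hS₀pos⟩ := hS₀
  have hins : ∀ p : Fin m × Fin m, p ∉ S₀ → Yw m y (insert p S₀) = 0 := by
    intro p hp
    have hci : (insert p S₀).card = S₀.card + 1 := Finset.card_insert_of_notMem hp
    rcases eq_or_lt_of_le hS₀card with h | h
    · exact hB _ (by omega)
    · have h1 : (insert p S₀).card ≤ s := by omega
      have h2 := hA _ (le_trans h1 (Nat.le_succ s))
      rcases h2.eq_or_lt with heq | hlt
      · exact heq.symm
      · exfalso
        have hmem : insert p S₀ ∈ 𝒮 := by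
          rw [h𝒮, Finset.mem_filter]
          exact ⟨Finset.mem_univ _, h1, hlt⟩
        have := hS₀max _ hmem
        omega
  -- constraints hold at S₀
  have hgl : ∀ l : Fin m, 0 ≤ schedG m P l S₀ := by
    intro l
    have h0 := psd_diag_nonneg (hGl l) ⟨S₀, hS₀card⟩
    rw [diag_entry m s _ S₀ hS₀card] at h0
    set f : Fin m × Fin m → ℝ := fun p => if p.1 ≤ l then P ^ (p.1.1 + 1) else 0 with hf
    have hform : ∀ I : Finset (Fin m × Fin m),
        schedG m P l I = (∑ p ∈ I, f p) - schedDemand P l.1 := by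
      intro I
      rw [schedG, hf, Finset.sum_filter]
    rw [Finset.sum_congr rfl (fun I _ => by rw [hform I]), pe_split] at h0
    have hsd : ∑ p : Fin m × Fin m, f p * Yw m y (insert p S₀)
        = (∑ p ∈ S₀, f p) * Yw m y S₀ := by
      rw [← Finset.sum_sdiff (Finset.subset_univ S₀)]
      have h1 : ∑ p ∈ univ \ S₀, f p * Yw m y (insert p S₀) = 0 :=
        Finset.sum_eq_zero fun p hp => by
          rw [hins p (Finset.mem_sdiff.mp hp).2, mul_zero]
      rw [h1, zero_add,
        Finset.sum_congr rfl (fun p hp => by rw [Finset.insert_eq_self.mpr hp]),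
        ← Finset.sum_mul]
    rw [hsd, ← sub_mul] at h0
    have hgS : 0 ≤ (∑ p ∈ S₀, f p) - schedDemand P l.1 := by
      by_contra hneg
      push_neg at hneg
      have := mul_neg_of_neg_of_pos hneg hS₀pos
      linarith
    rw [hform S₀]
    exact hgS
  exact no_small_feasible k s m hk hs hm P (by linarith) S₀ hS₀card hgl
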